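/- Fix an integer p ≥ 1, a real number α_p, and set X_p := (1/2) F^{−1}_0 + α_p F^p_p. Then for all integers 0 ≤ m < n there exist real numbers c_0, …, c_{n−m−1} and a real constant c, with c equal to α_p^{n−m} times a rational number depending only on m, n and p, such that with Y := Σ_{i=0}^{n−m−1} c_i Θ^{m+ip+i+1}_{n+ip} one has Θ^m_n + [Y, X_p] = c · Θ^{p(n−m)+n}_{p(n−m)+n}. In other words, modulo the image of the homological operator ad(X_p), every off-diagonal term Θ^m_n (m < n) can be replaced by a scalar multiple of the diagonal term Θ^{pn−pm+n}_{pn−pm+n}. -/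

import Mathlib

set_option maxHeartbeats 1000000


noncomputable section
open MvPolynomial

/-- Polynomial functions of the variables x, y, z (indexed `0, 1, 2`). -/
abbrev Poly3 := MvPolynomial (Fin 3) ℝ

/-- Polynomial vector fields on ℝ³, given by their three components. -/
abbrev VF3 := Fin 3 → Poly3

/-- The derivation action `v(g) = v₁ ∂g/∂x + v₂ ∂g/∂y + v₃ ∂g/∂z`. -/
def applyVF (v : VF3) (g : Poly3) : Poly3 := ∑ i, v i * pderiv i g

/-- The Lie bracket `[v,w] := v∘w − w∘v`, with i-th component `v(wᵢ) − w(vᵢ)`. -/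
def bracket (v w : VF3) : VF3 := fun i => applyVF v (w i) - applyVF w (v i)

/-- The divergence `div v = ∂v₁/∂x + ∂v₂/∂y + ∂v₃/∂z`. -/
def divergence (v : VF3) : Poly3 := ∑ i, pderiv i (v i)

/-- The vector field `F^l_k := x^l (y²+z²)^{k−l} ((k−l+1) x ∂_x − ((l+1)/2) y ∂_y − ((l+1)/2) z ∂_z)`
for integers `−1 ≤ l ≤ k`; for `l = −1` the second and third components vanish and this is
`(k+2)(y²+z²)^{k+1} ∂_x`. -/
def Fvf (l k : ℤ) : VF3 :=
  ![C ((k - l + 1 : ℤ) : ℝ) * X 0 ^ (l + 1).toNat * (X 1 ^ 2 + X 2 ^ 2) ^ (k - l).toNat,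
    C (-((l + 1 : ℤ) : ℝ) / 2) * X 0 ^ l.toNat * X 1 * (X 1 ^ 2 + X 2 ^ 2) ^ (k - l).toNat,
    C (-((l + 1 : ℤ) : ℝ) / 2) * X 0 ^ l.toNat * X 2 * (X 1 ^ 2 + X 2 ^ 2) ^ (k - l).toNat]

/-- The vector field `Θ^m_n := x^m (y²+z²)^{n−m} (z ∂_y − y ∂_z)` for integers `0 ≤ m ≤ n`. -/
def Tvf (m n : ℤ) : VF3 :=
  ![0,
    X 0 ^ m.toNat * (X 1 ^ 2 + X 2 ^ 2) ^ (n - m).toNat * X 2,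
    -(X 0 ^ m.toNat * (X 1 ^ 2 + X 2 ^ 2) ^ (n - m).toNat * X 1)]

namespace Helper

def Tn (A K : ℕ) : VF3 :=
  ![0, X 0 ^ A * (X 1 ^ 2 + X 2 ^ 2) ^ K * X 2, -(X 0 ^ A * (X 1 ^ 2 + X 2 ^ 2) ^ K * X 1)]

lemma Tvf_eq (a b : ℤ) : Tvf a b = Tn a.toNat (b - a).toNat := rfl

def Wn : VF3 := ![X 1 ^ 2 + X 2 ^ 2, 0, 0]
def Gn (P : ℕ) : VF3 :=
  ![C 2 * X 0 ^ (P + 1), -((P : Poly3) + 1) * (X 0 ^ P * X 1), -((P : Poly3) + 1) * (X 0 ^ P * X 2)]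

lemma applyVF_eq (v : VF3) (g : Poly3) :
    applyVF v g = v 0 * pderiv 0 g + v 1 * pderiv 1 g + v 2 * pderiv 2 g := by
  simp [applyVF, Fin.sum_univ_three]

lemma h00 : pderiv (0 : Fin 3) (X 0 : Poly3) = 1 := pderiv_X_self _
lemma h11 : pderiv (1 : Fin 3) (X 1 : Poly3) = 1 := pderiv_X_self _
lemma h22 : pderiv (2 : Fin 3) (X 2 : Poly3) = 1 := pderiv_X_self _
lemma h01 : pderiv (0 : Fin 3) (X 1 : Poly3) = 0 := pderiv_X_of_ne (by decide)
lemma h02 : pderiv (0 : Fin 3) (X 2 : Poly3) = 0 := pderiv_X_of_ne (by decide)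
lemma h10 : pderiv (1 : Fin 3) (X 0 : Poly3) = 0 := pderiv_X_of_ne (by decide)
lemma h12 : pderiv (1 : Fin 3) (X 2 : Poly3) = 0 := pderiv_X_of_ne (by decide)
lemma h20 : pderiv (2 : Fin 3) (X 0 : Poly3) = 0 := pderiv_X_of_ne (by decide)
lemma h21 : pderiv (2 : Fin 3) (X 1 : Poly3) = 0 := pderiv_X_of_ne (by decide)

lemma pdtwo (i : Fin 3) : pderiv i (2 : Poly3) = 0 := by
  rw [← map_ofNat (C : ℝ →+* Poly3) 2, pderiv_C]

lemma L1 (A K : ℕ) :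
    bracket (Tn A K) Wn = fun j => (-(A : ℝ)) • Tn (A - 1) (K + 1) j := by
  funext j
  fin_cases j <;>
  · simp only [bracket, Tn, Wn, applyVF_eq, Matrix.cons_val_zero, Matrix.cons_val_one,
      Matrix.head_cons, Matrix.cons_val_two, Matrix.tail_cons, Fin.isValue]
    cases A with
    | zero =>
      simp [Derivation.leibniz, Derivation.leibniz_pow, h00, h11, h22, h01, h02, h10, h12,
        h20, h21, pderiv_C, pdtwo, smul_eq_C_mul, map_mul, map_add, map_sub, map_natCast, map_ofNat, map_one, map_neg]
      try ring
    | succ A' =>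
      simp [Derivation.leibniz, Derivation.leibniz_pow, h00, h11, h22, h01, h02, h10, h12,
        h20, h21, pderiv_C, pdtwo, smul_eq_C_mul, map_mul, map_add, map_sub, map_natCast, map_ofNat, map_one, map_neg]
      try push_cast
      try ring

lemma L2 (A K P : ℕ) :
    bracket (Tn A K) (Gn P) = fun j => (2 * (((P : ℝ) + 1) * K - A)) • Tn (A + P) K j := by
  funext j
  fin_cases j <;>
  · simp only [bracket, Tn, Gn, applyVF_eq, Matrix.cons_val_zero, Matrix.cons_val_one,
      Matrix.head_cons, Matrix.cons_val_two, Matrix.tail_cons, Fin.isValue]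
    cases A with
    | zero =>
      cases K with
      | zero =>
        simp [Derivation.leibniz, Derivation.leibniz_pow, h00, h11, h22, h01, h02, h10, h12,
          h20, h21, pderiv_C, pdtwo, smul_eq_C_mul, map_mul, map_add, map_sub, map_natCast, map_ofNat, map_one, map_neg]
        try push_cast
        try ring
      | succ K' =>
        simp [Derivation.leibniz, Derivation.leibniz_pow, h00, h11, h22, h01, h02, h10, h12,
          h20, h21, pderiv_C, pdtwo, smul_eq_C_mul, map_mul, map_add, map_sub, map_natCast, map_ofNat, map_one, map_neg]
        try push_cast
        try ring
    | succ A' =>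
      cases K with
      | zero =>
        simp [Derivation.leibniz, Derivation.leibniz_pow, h00, h11, h22, h01, h02, h10, h12,
          h20, h21, pderiv_C, pdtwo, smul_eq_C_mul, map_mul, map_add, map_sub, map_natCast, map_ofNat, map_one, map_neg]
        try push_cast
        try ring
      | succ K' =>
        simp [Derivation.leibniz, Derivation.leibniz_pow, h00, h11, h22, h01, h02, h10, h12,
          h20, h21, pderiv_C, pdtwo, smul_eq_C_mul, map_mul, map_add, map_sub, map_natCast, map_ofNat, map_one, map_neg]
        try push_cast
        try ring

lemma applyVF_add_right (v : VF3) (g h : Poly3) :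
    applyVF v (g + h) = applyVF v g + applyVF v h := by
  simp [applyVF, mul_add, Finset.sum_add_distrib]

lemma applyVF_smul_right (v : VF3) (r : ℝ) (g : Poly3) :
    applyVF v (r • g) = r • applyVF v g := by
  simp [applyVF, map_smul, mul_smul_comm, Finset.smul_sum]

lemma bracket_add_smul_right (v w g : VF3) (r : ℝ) :
    bracket v (fun j => w j + r • g j) = fun j => bracket v w j + r • bracket v g j := by
  funext j
  show applyVF v (w j + r • g j) - applyVF (fun j => w j + r • g j) (v j) = _
  have h2 : applyVF (fun j => w j + r • g j) (v j)
      = applyVF w (v j) + r • applyVF g (v j) := by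
    simp [applyVF, add_mul, Finset.sum_add_distrib, smul_mul_assoc, Finset.smul_sum]
  rw [applyVF_add_right, applyVF_smul_right, h2]
  simp only [bracket, smul_sub]
  ring_nf

lemma bracket_sum_smul {s : Finset ℕ} (cs : ℕ → ℝ) (F : ℕ → VF3) (w : VF3) :
    bracket (fun j => ∑ i ∈ s, cs i • F i j) w
      = fun j => ∑ i ∈ s, cs i • bracket (F i) w j := by
  funext j
  show applyVF (fun j => ∑ i ∈ s, cs i • F i j) (w j)
      - applyVF w (∑ i ∈ s, cs i • F i j) = _
  have h1 : applyVF (fun j => ∑ i ∈ s, cs i • F i j) (w j)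
      = ∑ i ∈ s, cs i • applyVF (F i) (w j) := by
    simp only [applyVF, Finset.sum_mul, smul_mul_assoc]
    rw [Finset.sum_comm]
    simp [Finset.smul_sum]
  have h2 : applyVF w (∑ i ∈ s, cs i • F i j)
      = ∑ i ∈ s, cs i • applyVF w (F i j) := by
    simp only [applyVF, map_sum, map_smul, Finset.mul_sum, mul_smul_comm]
    rw [Finset.sum_comm]
    simp [Finset.smul_sum]
  rw [h1, h2, ← Finset.sum_sub_distrib]
  simp [bracket, smul_sub]

lemma Lmain (A K P : ℕ) (b : ℝ) :
    bracket (Tn A K) (fun j => Wn j + b • Gn P j)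
      = fun j => (-(A : ℝ)) • Tn (A - 1) (K + 1) j
          + (b * (2 * (((P : ℝ) + 1) * K - A))) • Tn (A + P) K j := by
  rw [bracket_add_smul_right, L1, L2]
  funext j
  rw [mul_smul]

lemma Xp_eq (p : ℤ) (hp : 1 ≤ p) (a : ℝ) :
    (fun j => (1 / 2 : ℝ) • Fvf (-1) 0 j + a • Fvf p p j)
      = fun j => Wn j + (a / 2) • Gn p.toNat j := by
  have h1 : (p + 1).toNat = p.toNat + 1 := by omega
  have h2 : (p - p).toNat = 0 := by omega
  have h3 : ((p + 1 : ℤ) : ℝ) = (p.toNat : ℝ) + 1 := by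
    have h : ((p.toNat : ℤ)) = p := Int.toNat_of_nonneg (by omega)
    have h' : (p : ℝ) = (p.toNat : ℝ) := by exact_mod_cast h.symm
    push_cast
    rw [h']
  have hC2 : ((2 : Poly3)) = C (2 : ℝ) := (map_ofNat (C : ℝ →+* Poly3) 2).symm
  have e1 : (C (2⁻¹ : ℝ) : Poly3) * 2 = 1 := by
    rw [hC2, ← map_mul]; norm_num
  have e2 : (C a : Poly3) = C (a / 2) * 2 := by
    rw [hC2, ← map_mul]; norm_num
  have e3 : (C a : Poly3) * C ((-1 - (p.toNat : ℝ)) / 2)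
      = -(C (a / 2)) - C (a / 2) * ((p.toNat : ℕ) : Poly3) := by
    rw [← map_natCast (C : ℝ →+* Poly3) p.toNat, ← map_mul, ← map_mul, ← map_neg, ← map_sub]
    exact congrArg C (by ring)
  funext j
  fin_cases j
  · simp [Fvf, Wn, Gn, h1, h2, h3, smul_eq_C_mul, map_mul, map_add, map_sub, map_neg,
      map_ofNat, map_one, map_natCast, map_div₀]
    linear_combination (X 1 ^ 2 + X 2 ^ 2 : Poly3) * e1 + (X 0 * X 0 ^ p.toNat : Poly3) * e2
  · simp [Fvf, Wn, Gn, h1, h2, h3, smul_eq_C_mul, map_mul, map_add, map_sub, map_neg,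
      map_ofNat, map_one, map_natCast, map_div₀]
    linear_combination (X 0 ^ p.toNat * X 1 : Poly3) * e3
  · simp [Fvf, Wn, Gn, h1, h2, h3, smul_eq_C_mul, map_mul, map_add, map_sub, map_neg,
      map_ofNat, map_one, map_natCast, map_div₀]
    linear_combination (X 0 ^ p.toNat * X 2 : Poly3) * e3

def gseq (a : ℝ) (M P k : ℕ) : ℕ → ℝ
  | 0 => 1
  | i + 1 => a * (((P : ℝ) + 1) * ((k - 1 - i : ℕ) : ℝ) - ((M + i * (P + 1) + 1 : ℕ) : ℝ))
      * gseq a M P k i / ((M + i * (P + 1) + 1 : ℕ) : ℝ)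

lemma gseq_rat (a : ℝ) (M P k : ℕ) : ∀ i, ∃ q : ℚ, gseq a M P k i = a ^ i * (q : ℝ)
  | 0 => ⟨1, by simp [gseq]⟩
  | i + 1 => by
    obtain ⟨q, hq⟩ := gseq_rat a M P k i
    refine ⟨(((P : ℚ) + 1) * ((k - 1 - i : ℕ) : ℚ) - ((M + i * (P + 1) + 1 : ℕ) : ℚ))
        / ((M + i * (P + 1) + 1 : ℕ) : ℚ) * q, ?_⟩
    show a * _ * gseq a M P k i / _ = _
    rw [hq]
    push_cast
    ring

end Helper

/-- with `X_p := (1/2)F^{−1}_0 + α_p F^p_p` (`p ≥ 1`), for all integers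
`0 ≤ m < n` there are reals `c_0, …, c_{n−m−1}` and a constant `c`, with `c` equal to
`α_p^{n−m}` times a rational number, such that for
`Y := Σ_{i=0}^{n−m−1} c_i Θ^{m+ip+i+1}_{n+ip}` one has
`Θ^m_n + [Y, X_p] = c · Θ^{p(n−m)+n}_{p(n−m)+n}`. -/
theorem offdiagonal_theta_normalization (p : ℤ) (hp : 1 ≤ p) (αp : ℝ)
    (m n : ℤ) (hm : 0 ≤ m) (hmn : m < n) :
    ∃ (cs : ℕ → ℝ) (c : ℝ) (q : ℚ), c = αp ^ (n - m).toNat * (q : ℝ) ∧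
      (fun j => Tvf m n j +
        bracket
          (fun j' => ∑ i ∈ Finset.range (n - m).toNat,
            cs i • Tvf (m + (i : ℤ) * p + (i : ℤ) + 1) (n + (i : ℤ) * p) j')
          (fun j' => (1 / 2 : ℝ) • Fvf (-1) 0 j' + αp • Fvf p p j') j)
      = fun j => c • Tvf (p * (n - m) + n) (p * (n - m) + n) j := by
  classical
  obtain ⟨M, hM⟩ : ∃ M : ℕ, (M : ℤ) = m := ⟨m.toNat, Int.toNat_of_nonneg hm⟩
  obtain ⟨P, hP⟩ : ∃ P : ℕ, (P : ℤ) = p := ⟨p.toNat, Int.toNat_of_nonneg (by omega)⟩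
  obtain ⟨k, hk⟩ : ∃ k : ℕ, (k : ℤ) = n - m := ⟨(n - m).toNat, Int.toNat_of_nonneg (by omega)⟩
  have hkk : (n - m).toNat = k := by omega
  have hptn : p.toNat = P := by omega
  rw [hkk]
  obtain ⟨q, hq⟩ := Helper.gseq_rat αp M P k k
  set gs := Helper.gseq αp M P k with hgs
  refine ⟨fun i => gs i / ((M + i * (P + 1) + 1 : ℕ) : ℝ), gs k, q, hq, ?_⟩
  funext j
  rw [Helper.Xp_eq p hp αp, hptn]
  have hY : (fun j' => ∑ i ∈ Finset.range k,
        (gs i / ((M + i * (P + 1) + 1 : ℕ) : ℝ)) •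
          Tvf (m + (i : ℤ) * p + (i : ℤ) + 1) (n + (i : ℤ) * p) j')
      = fun j' => ∑ i ∈ Finset.range k,
        (gs i / ((M + i * (P + 1) + 1 : ℕ) : ℝ)) •
          Helper.Tn (M + i * (P + 1) + 1) (k - 1 - i) j' := by
    funext j'
    refine Finset.sum_congr rfl fun i hi => ?_
    have hi' : i < k := Finset.mem_range.mp hi
    have e1 : m + (i : ℤ) * p + (i : ℤ) + 1 = ((M + i * (P + 1) + 1 : ℕ) : ℤ) := by
      rw [← hM, ← hP]; push_cast; ring
    have e2 : n + (i : ℤ) * p - (m + (i : ℤ) * p + (i : ℤ) + 1) = ((k - 1 - i : ℕ) : ℤ) := by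
      have h3 : ((k - 1 - i : ℕ) : ℤ) = (k : ℤ) - 1 - (i : ℤ) := by omega
      rw [h3, hk]; ring
    rw [Helper.Tvf_eq, e2, e1, Int.toNat_natCast, Int.toNat_natCast]
  rw [hY]
  have hbr : bracket
      (fun j' => ∑ i ∈ Finset.range k,
        (gs i / ((M + i * (P + 1) + 1 : ℕ) : ℝ)) •
          Helper.Tn (M + i * (P + 1) + 1) (k - 1 - i) j')
      (fun j' => Helper.Wn j' + (αp / 2) • Helper.Gn P j')
      = fun j'' => ∑ i ∈ Finset.range k,
        (gs i / ((M + i * (P + 1) + 1 : ℕ) : ℝ)) •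
          bracket (Helper.Tn (M + i * (P + 1) + 1) (k - 1 - i))
            (fun j' => Helper.Wn j' + (αp / 2) • Helper.Gn P j') j'' :=
    Helper.bracket_sum_smul _ _ _
  rw [hbr]
  beta_reduce
  have hstep : ∀ i ∈ Finset.range k,
      (gs i / ((M + i * (P + 1) + 1 : ℕ) : ℝ)) •
        bracket (Helper.Tn (M + i * (P + 1) + 1) (k - 1 - i))
          (fun j' => Helper.Wn j' + (αp / 2) • Helper.Gn P j') j
      = gs (i + 1) • Helper.Tn (M + (i + 1) * (P + 1)) (k - (i + 1)) j
        - gs i • Helper.Tn (M + i * (P + 1)) (k - i) j := by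
    intro i hi
    have hi' : i < k := Finset.mem_range.mp hi
    have hL := congrFun (Helper.Lmain (M + i * (P + 1) + 1) (k - 1 - i) P (αp / 2)) j
    rw [hL]
    have e1 : M + i * (P + 1) + 1 - 1 = M + i * (P + 1) := by omega
    have e2 : k - 1 - i + 1 = k - i := by omega
    have e3 : M + i * (P + 1) + 1 + P = M + (i + 1) * (P + 1) := by ring
    have e4 : k - 1 - i = k - (i + 1) := by omega
    rw [e1, e2, e3, e4]
    rw [smul_add, smul_smul, smul_smul]
    have ha : ((M + i * (P + 1) + 1 : ℕ) : ℝ) ≠ 0 := by positivity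
    have c1 : gs i / ((M + i * (P + 1) + 1 : ℕ) : ℝ) * (-((M + i * (P + 1) + 1 : ℕ) : ℝ))
        = -(gs i) := by field_simp
    have c2 : gs i / ((M + i * (P + 1) + 1 : ℕ) : ℝ) *
          (αp / 2 * (2 * (((P : ℝ) + 1) * ((k - (i + 1) : ℕ) : ℝ)
            - ((M + i * (P + 1) + 1 : ℕ) : ℝ))))
        = gs (i + 1) := by
      rw [hgs]
      simp only [Helper.gseq]
      have e5 : k - (i + 1) = k - 1 - i := by omega
      rw [e5]
      field_simp
    rw [c1, c2, neg_smul]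
    abel
  rw [Finset.sum_congr rfl hstep]
  have htel : (∑ i ∈ Finset.range k,
      (gs (i + 1) • Helper.Tn (M + (i + 1) * (P + 1)) (k - (i + 1)) j
        - gs i • Helper.Tn (M + i * (P + 1)) (k - i) j))
      = gs k • Helper.Tn (M + k * (P + 1)) (k - k) j
        - gs 0 • Helper.Tn (M + 0 * (P + 1)) (k - 0) j :=
    Finset.sum_range_sub (fun i => gs i • Helper.Tn (M + i * (P + 1)) (k - i) j) k
  rw [htel]
  have hU0 : Tvf m n = Helper.Tn (M + 0 * (P + 1)) (k - 0) := by
    rw [Helper.Tvf_eq]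
    have a1 : m.toNat = M + 0 * (P + 1) := by simp; omega
    have a2 : (n - m).toNat = k - 0 := by omega
    rw [a1, a2]
  have hUk : Tvf (p * (n - m) + n) (p * (n - m) + n)
      = Helper.Tn (M + k * (P + 1)) (k - k) := by
    rw [Helper.Tvf_eq]
    have e : p * (n - m) + n = ((M + k * (P + 1) : ℕ) : ℤ) := by
      have hn : n = (M : ℤ) + (k : ℤ) := by omega
      rw [← hk, ← hP, hn]; push_cast; ring
    rw [e, Int.toNat_natCast]
    have a2 : ((((M + k * (P + 1) : ℕ) : ℤ)) - (((M + k * (P + 1) : ℕ) : ℤ))).toNat = k - k := by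
      omega
    rw [a2]
  rw [hU0, hUk]
  have hgs0 : gs 0 = 1 := rfl
  rw [hgs0, one_smul]
  abel
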